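/- There is a constant c > 0 such that ∑_{q ≤ N} 1/d(q) ≥ c·N/(log 3N) for all positive integers N, where d(q) is the number of divisors of q. -/
import Mathlib

open Finset

lemma aux_swap (N : ℕ) :
    ∑ q ∈ Finset.Icc 1 N, q.divisors.card = ∑ k ∈ Finset.Icc 1 N, N / k := by
  have hIcc : Finset.Icc 1 N = Finset.Ioc 0 N := by
    ext x; simp [Nat.lt_iff_add_one_le]
  calc ∑ q ∈ Finset.Icc 1 N, q.divisors.card
      = ∑ q ∈ Finset.Icc 1 N, ((Finset.Icc 1 N).filter (· ∣ q)).card := by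
        refine Finset.sum_congr rfl fun q hq => ?_
        simp only [Finset.mem_Icc] at hq
        congr 1
        ext k
        simp only [Nat.mem_divisors, Finset.mem_filter, Finset.mem_Icc]
        constructor
        · rintro ⟨hk, hq0⟩
          exact ⟨⟨Nat.one_le_iff_ne_zero.2 (fun h => by simp [h] at hk; omega),
            (Nat.le_of_dvd (by omega) hk).trans hq.2⟩, hk⟩
        · rintro ⟨_, hk⟩
          exact ⟨hk, by omega⟩
    _ = ∑ q ∈ Finset.Icc 1 N, ∑ k ∈ Finset.Icc 1 N, if k ∣ q then 1 else 0 := by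
        refine Finset.sum_congr rfl fun q _ => ?_
        rw [Finset.card_filter]
    _ = ∑ k ∈ Finset.Icc 1 N, ∑ q ∈ Finset.Icc 1 N, if k ∣ q then 1 else 0 :=
        Finset.sum_comm
    _ = ∑ k ∈ Finset.Icc 1 N, N / k := by
        refine Finset.sum_congr rfl fun k _ => ?_
        rw [← Finset.card_filter, hIcc, Nat.Ioc_filter_dvd_card_eq_div]

theorem stmt12 :
    ∃ c : ℝ, 0 < c ∧ ∀ N : ℕ, 0 < N →
      c * N / Real.log (3 * N) ≤ ∑ q ∈ Finset.Icc 1 N, (1 : ℝ) / (q.divisors.card : ℝ) := by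
  refine ⟨1, one_pos, fun N hN => ?_⟩
  set S : ℝ := ∑ q ∈ Finset.Icc 1 N, (1 : ℝ) / (q.divisors.card : ℝ) with hS
  set T : ℝ := ∑ q ∈ Finset.Icc 1 N, (q.divisors.card : ℝ) with hT
  have hL : (0:ℝ) < Real.log (3 * N) := by
    apply Real.log_pos
    have : (1:ℝ) ≤ (N:ℝ) := by exact_mod_cast hN
    nlinarith
  -- Cauchy–Schwarz
  have hCS : (N : ℝ) ^ 2 ≤ S * T := by
    have := Finset.sum_sq_le_sum_mul_sum_of_sq_eq_mul (Finset.Icc 1 N)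
      (r := fun _ => (1:ℝ)) (f := fun q => (1 : ℝ) / (q.divisors.card : ℝ))
      (g := fun q => (q.divisors.card : ℝ))
      (fun i _ => by positivity) (fun i _ => by positivity)
      (fun i hi => by
        have hi1 : 1 ≤ i := (Finset.mem_Icc.1 hi).1
        have hd : (i.divisors.card : ℝ) ≠ 0 := by
          have : 1 ∈ i.divisors := Nat.one_mem_divisors.mpr (by omega)
          exact_mod_cast Finset.card_ne_zero_of_mem this
        field_simp)
    simpa [Nat.card_Icc, hS, hT, one_div] using this
  -- bound on T
  have hTb : T ≤ (N : ℝ) * Real.log (3 * N) := by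
    have hswap := aux_swap N
    have hT1 : T = ∑ k ∈ Finset.Icc 1 N, ((N / k : ℕ) : ℝ) := by
      rw [hT, ← Nat.cast_sum, ← Nat.cast_sum, hswap]
    have hT2 : T ≤ ∑ k ∈ Finset.Icc 1 N, (N : ℝ) / (k : ℝ) := by
      rw [hT1]
      exact Finset.sum_le_sum fun k _ => Nat.cast_div_le
    have hT3 : ∑ k ∈ Finset.Icc 1 N, (N : ℝ) / (k : ℝ)
        = (N : ℝ) * ((harmonic N : ℚ) : ℝ) := by
      rw [harmonic_eq_sum_Icc]
      push_cast
      rw [Finset.mul_sum]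
      exact Finset.sum_congr rfl fun k _ => by rw [div_eq_mul_inv]
    have hharm : ((harmonic N : ℚ) : ℝ) ≤ 1 + Real.log N := harmonic_le_one_add_log N
    have hlog3 : 1 + Real.log N ≤ Real.log (3 * N) := by
      have h3 : (0:ℝ) < (N:ℝ) := by exact_mod_cast hN
      rw [Real.log_mul (by norm_num) (ne_of_gt h3)]
      have : (1:ℝ) ≤ Real.log 3 := by
        rw [Real.le_log_iff_exp_le (by norm_num)]
        exact (Real.exp_one_lt_d9.le).trans (by norm_num)
      linarith
    calc T ≤ (N : ℝ) * ((harmonic N : ℚ) : ℝ) := by rw [← hT3]; exact hT2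
      _ ≤ (N : ℝ) * (1 + Real.log N) := by
          have h0 : (0:ℝ) ≤ (N:ℝ) := Nat.cast_nonneg N
          exact mul_le_mul_of_nonneg_left hharm h0
      _ ≤ (N : ℝ) * Real.log (3 * N) :=
          mul_le_mul_of_nonneg_left hlog3 (Nat.cast_nonneg N)
  -- conclude
  have hS0 : 0 ≤ S := Finset.sum_nonneg fun i _ => by positivity
  rw [one_mul, div_le_iff₀ hL]
  nlinarith [mul_le_mul_of_nonneg_left hTb hS0, (Nat.one_le_cast (α := ℝ)).mpr hN]
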